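/- Let a = (a_1, …, a_k) be a nonempty finite sequence of positive integers with b := a_1 + ⋯ + a_k, and let ξ = (ξ_i)_{i≥1} have the GEM(a) distribution. Then E[D(ξ)] = −2 + (∑_{i=1}^k i·a_i + k + 2)/(1 + b), where D(ξ) = −2 + ∑_{i=1}^∞ i·ξ_i. Moreover E[D(ξ)] = 0 when ξ has the standard GEM distribution. -/

import Mathlib

open MeasureTheory ProbabilityTheory

/-- The uniform distribution on the unit interval `(0,1)`. -/
noncomputable def unifMeasure : Measure ℝ := volume.restrict (Set.Ioo 0 1)

/-- The Beta distribution with parameters `a`, `b`. -/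
noncomputable def betaMeasure (a b : ℝ) : Measure ℝ :=
  unifMeasure.withDensity fun t =>
    ENNReal.ofReal (t ^ (a - 1) * (1 - t) ^ (b - 1) *
      (Real.Gamma (a + b) / (Real.Gamma a * Real.Gamma b)))

lemma betaNat (p q : ℕ) : ∫ x in Set.Ioo (0:ℝ) 1, x ^ p * (1 - x) ^ q =
    (p.factorial * q.factorial : ℝ) / (p + q + 1).factorial := by
  have h := Complex.Gamma_mul_Gamma_eq_betaIntegral (s := (p : ℂ) + 1) (t := (q : ℂ) + 1)
    (by simp; positivity) (by simp; positivity)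
  have hB : Complex.betaIntegral ((p : ℂ) + 1) ((q : ℂ) + 1)
      = ((∫ x in (0:ℝ)..1, x ^ p * (1 - x) ^ q : ℝ) : ℂ) := by
    rw [Complex.betaIntegral]
    rw [← intervalIntegral.integral_ofReal]
    refine intervalIntegral.integral_congr fun x _ => ?_
    push_cast
    rw [add_sub_cancel_right, add_sub_cancel_right, Complex.cpow_natCast, Complex.cpow_natCast]
  rw [hB, Complex.Gamma_nat_eq_factorial, Complex.Gamma_nat_eq_factorial] at h
  have h2 : (p : ℂ) + 1 + ((q : ℂ) + 1) = ((p + q + 1 : ℕ) : ℂ) + 1 := by push_cast; ring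
  rw [h2, Complex.Gamma_nat_eq_factorial] at h
  have h3 : (∫ x in (0:ℝ)..1, x ^ p * (1 - x) ^ q)
      = (p.factorial * q.factorial : ℝ) / (p + q + 1).factorial := by
    have hne : ((p + q + 1).factorial : ℂ) ≠ 0 := by
      exact_mod_cast Nat.cast_ne_zero.mpr (p+q+1).factorial_ne_zero
    field_simp at h ⊢
    rw [mul_comm]; exact_mod_cast h.symm
  rw [← h3, intervalIntegral.integral_of_le (by norm_num : (0:ℝ) ≤ 1),
    integral_Ioc_eq_integral_Ioo]

lemma betaMeasure_integral (p q : ℕ) (g : ℝ → ℝ) :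
    ∫ x, g x ∂_root_.betaMeasure ((p:ℝ) + 1) ((q:ℝ) + 1) =
      ∫ x in Set.Ioo (0:ℝ) 1, (x ^ p * (1 - x) ^ q *
        (((p + q + 1).factorial : ℝ) / (p.factorial * q.factorial))) * g x := by
  set c : ℝ := ((p + q + 1).factorial : ℝ) / (p.factorial * q.factorial) with hc
  have hc0 : 0 ≤ c := by positivity
  have hΓ : ∀ t : ℝ, t ^ ((p:ℝ) + 1 - 1) * (1 - t) ^ ((q:ℝ) + 1 - 1) *
      (Real.Gamma ((p:ℝ) + 1 + ((q:ℝ) + 1)) / (Real.Gamma ((p:ℝ) + 1) * Real.Gamma ((q:ℝ) + 1)))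
      = t ^ p * (1 - t) ^ q * c := by
    intro t
    have h1 : (p:ℝ) + 1 + ((q:ℝ) + 1) = ((p + q + 1 : ℕ) : ℝ) + 1 := by push_cast; ring
    rw [h1, Real.Gamma_nat_eq_factorial, Real.Gamma_nat_eq_factorial,
      Real.Gamma_nat_eq_factorial, add_sub_cancel_right, add_sub_cancel_right,
      Real.rpow_natCast, Real.rpow_natCast, hc]
  have hmeas : Measurable fun t : ℝ => Real.toNNReal (t ^ p * (1 - t) ^ q * c) := by
    fun_prop
  have hmeq : _root_.betaMeasure ((p:ℝ) + 1) ((q:ℝ) + 1) =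
      unifMeasure.withDensity fun t => ((t ^ p * (1 - t) ^ q * c).toNNReal : ENNReal) := by
    rw [_root_.betaMeasure]
    congr 1
    funext t
    rw [hΓ t]
    rfl
  rw [hmeq, integral_withDensity_eq_integral_smul hmeas]
  rw [unifMeasure]
  refine setIntegral_congr_fun measurableSet_Ioo fun x hx => ?_
  have h2 : (0:ℝ) ≤ 1 - x := by linarith [hx.2]
  have h0 : 0 ≤ x ^ p * (1 - x) ^ q * c :=
    mul_nonneg (mul_nonneg (pow_nonneg hx.1.le p) (pow_nonneg h2 q)) hc0
  show ((x ^ p * (1 - x) ^ q * c).toNNReal : ℝ) * g x = x ^ p * (1 - x) ^ q * c * g x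
  rw [Real.coe_toNNReal _ h0]

lemma betaMeasure_mean (m n : ℕ) (hm : 0 < m) (hn : 0 < n) :
    ∫ x, x ∂_root_.betaMeasure (m:ℝ) (n:ℝ) = m / (m + n) := by
  obtain ⟨p, rfl⟩ : ∃ p, m = p + 1 := ⟨m - 1, (Nat.succ_pred_eq_of_pos hm).symm⟩
  obtain ⟨q, rfl⟩ : ∃ q, n = q + 1 := ⟨n - 1, (Nat.succ_pred_eq_of_pos hn).symm⟩
  have hcast : ((p + 1 : ℕ) : ℝ) = (p : ℝ) + 1 := by push_cast; ring
  have hcast' : ((q + 1 : ℕ) : ℝ) = (q : ℝ) + 1 := by push_cast; ring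
  rw [hcast, hcast', betaMeasure_integral p q (fun x => x)]
  set c : ℝ := ((p + q + 1).factorial : ℝ) / (p.factorial * q.factorial) with hc
  have h1 : ∀ x : ℝ, (x ^ p * (1 - x) ^ q * c) * x = c * (x ^ (p + 1) * (1 - x) ^ q) := by
    intro x; simp [pow_succ]; ring
  simp_rw [h1]
  rw [integral_const_mul, betaNat (p+1) q]
  have e1 : (p + 1 + q + 1) = (p + q + 1) + 1 := by ring
  rw [e1, Nat.factorial_succ (p + q + 1), Nat.factorial_succ p]
  have f1 : (0:ℝ) < p.factorial := by positivity
  have f2 : (0:ℝ) < q.factorial := by positivity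
  have f3 : (0:ℝ) < (p + q + 1).factorial := by positivity
  have f4 : (0:ℝ) < (p:ℝ) + 1 + ((q:ℝ) + 1) := by positivity
  rw [hc]
  field_simp
  push_cast
  ring

lemma betaMeasure_mean' (m n : ℕ) (hm : 0 < m) (hn : 0 < n) :
    ∫ x, (1 - x) ∂_root_.betaMeasure (m:ℝ) (n:ℝ) = n / (m + n) := by
  obtain ⟨p, rfl⟩ : ∃ p, m = p + 1 := ⟨m - 1, (Nat.succ_pred_eq_of_pos hm).symm⟩
  obtain ⟨q, rfl⟩ : ∃ q, n = q + 1 := ⟨n - 1, (Nat.succ_pred_eq_of_pos hn).symm⟩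
  have hcast : ((p + 1 : ℕ) : ℝ) = (p : ℝ) + 1 := by push_cast; ring
  have hcast' : ((q + 1 : ℕ) : ℝ) = (q : ℝ) + 1 := by push_cast; ring
  rw [hcast, hcast', betaMeasure_integral p q (fun x => 1 - x)]
  set c : ℝ := ((p + q + 1).factorial : ℝ) / (p.factorial * q.factorial) with hc
  have h1 : ∀ x : ℝ, (x ^ p * (1 - x) ^ q * c) * (1 - x) = c * (x ^ p * (1 - x) ^ (q + 1)) := by
    intro x; simp [pow_succ]; ring
  simp_rw [h1]
  rw [integral_const_mul, betaNat p (q+1)]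
  have e1 : (p + (q + 1) + 1) = (p + q + 1) + 1 := by ring
  rw [e1, Nat.factorial_succ (p + q + 1), Nat.factorial_succ q]
  have f1 : (0:ℝ) < p.factorial := by positivity
  have f2 : (0:ℝ) < q.factorial := by positivity
  have f3 : (0:ℝ) < (p + q + 1).factorial := by positivity
  have f4 : (0:ℝ) < (p:ℝ) + 1 + ((q:ℝ) + 1) := by positivity
  rw [hc]
  field_simp
  push_cast
  ring

lemma unif_mean : ∫ x, x ∂unifMeasure = 1 / 2 := by
  have h := betaNat 1 0
  simp only [pow_one, pow_zero, mul_one] at h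
  rw [unifMeasure]
  simpa using h

lemma unif_mean' : ∫ x, (1 - x) ∂unifMeasure = 1 / 2 := by
  have h := betaNat 0 1
  simp only [pow_one, pow_zero, one_mul] at h
  rw [unifMeasure]
  simpa using h

lemma unifMeasure_compl_Ioo : unifMeasure (Set.Ioo (0:ℝ) 1)ᶜ = 0 := by
  rw [unifMeasure, Measure.restrict_apply measurableSet_Ioo.compl]
  simp

lemma ae_mem_Ioo_of_law {Ω : Type*} [MeasurableSpace Ω] {μ : Measure Ω} {Z : Ω → ℝ}
    (hm : Measurable Z)
    (h : Measure.map Z μ = unifMeasure ∨ ∃ a b, Measure.map Z μ = _root_.betaMeasure a b) :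
    ∀ᵐ ω ∂μ, Z ω ∈ Set.Ioo (0:ℝ) 1 := by
  have hz : Measure.map Z μ (Set.Ioo (0:ℝ) 1)ᶜ = 0 := by
    rcases h with h | ⟨a, b, h⟩
    · rw [h]; exact unifMeasure_compl_Ioo
    · rw [h, _root_.betaMeasure]
      exact (withDensity_absolutelyContinuous unifMeasure _) unifMeasure_compl_Ioo
  rw [Measure.map_apply hm measurableSet_Ioo.compl] at hz
  rw [ae_iff]
  convert hz using 2
  rfl

lemma integral_finset_prod_of_indep {Ω : Type*} [MeasurableSpace Ω] {μ : Measure Ω}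
    [IsProbabilityMeasure μ] {X : ℕ → Ω → ℝ} (hmeas : ∀ i, Measurable (X i))
    (hindep : iIndepFun X μ)
    (hint : ∀ i, Integrable (X i) μ) (s : Finset ℕ) :
    Integrable (fun ω => ∏ j ∈ s, X j ω) μ ∧
      ∫ ω, ∏ j ∈ s, X j ω ∂μ = ∏ j ∈ s, ∫ ω, X j ω ∂μ := by
  classical
  induction s using Finset.induction_on with
  | empty => simp
  | @insert i s hi ih =>
    have hindep2 : IndepFun (∏ j ∈ s, X j) (X i) μ :=
      hindep.indepFun_finsetProd_of_notMem hmeas hi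
    have hps : (fun ω => ∏ j ∈ s, X j ω) = ∏ j ∈ s, X j := by
      funext ω; rw [Finset.prod_apply]
    have hint2 : Integrable ((∏ j ∈ s, X j) * X i) μ :=
      hindep2.integrable_mul (hps ▸ ih.1) (hint i)
    have heq : (fun ω => ∏ j ∈ insert i s, X j ω) = (∏ j ∈ s, X j) * X i := by
      funext ω
      rw [Finset.prod_insert hi, Pi.mul_apply, Finset.prod_apply, mul_comm]
    constructor
    · rw [heq]; exact hint2
    · rw [show (∫ ω, ∏ j ∈ insert i s, X j ω ∂μ) = ∫ ω, ((∏ j ∈ s, X j) * X i) ω ∂μ by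
        rw [← heq]]
      rw [hindep2.integral_mul_eq_mul_integral (hps ▸ ih.1.aestronglyMeasurable) (hint i).aestronglyMeasurable,
        Finset.prod_insert hi, ← hps, ih.2, mul_comm]

lemma gem_master {Ω : Type*} [MeasurableSpace Ω] (μ : Measure Ω) [IsProbabilityMeasure μ]
    (k : ℕ) (a : ℕ → ℕ) (ha : ∀ i < k, 0 < a i)
    (ζ : ℕ → Ω → ℝ) (hζmeas : ∀ i, Measurable (ζ i))
    (hζindep : iIndepFun ζ μ)
    (hζlaw : ∀ i < k, Measure.map (ζ i) μ =
      _root_.betaMeasure (a i) (1 + ∑ j ∈ Finset.Ico (i + 1) k, (a j : ℝ)))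
    (hζlaw' : ∀ i, k ≤ i → Measure.map (ζ i) μ = unifMeasure)
    (ξ : ℕ → Ω → ℝ)
    (hξ : ∀ i ω, ξ i ω = ζ i ω * ∏ j ∈ Finset.range i, (1 - ζ j ω)) :
    ∫ ω, (-2 + ∑' i : ℕ, ((i : ℝ) + 1) * ξ i ω) ∂μ =
      -2 + ((∑ i ∈ Finset.range k, ((i : ℝ) + 1) * a i) + k + 2) /
            (1 + ∑ i ∈ Finset.range k, (a i : ℝ)) := by
  classical
  -- basic notation
  set T : ℕ → ℝ := fun i => 1 + ∑ j ∈ Finset.Ico i k, (a j : ℝ) with hT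
  have hTpos : ∀ i, 0 < T i := by
    intro i
    have : (0:ℝ) ≤ ∑ j ∈ Finset.Ico i k, (a j : ℝ) :=
      Finset.sum_nonneg fun j _ => Nat.cast_nonneg _
    simp only [hT]; linarith
  have hTne : ∀ i, T i ≠ 0 := fun i => (hTpos i).ne'
  have hTk : ∀ i, k ≤ i → T i = 1 := by
    intro i hik
    simp [hT, Finset.Ico_eq_empty_of_le hik]
  have hTrec : ∀ i < k, (a i : ℝ) + T (i + 1) = T i := by
    intro i hik
    simp only [hT]
    rw [Finset.sum_eq_sum_Ico_succ_bot hik]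
    ring
  -- a.e. membership
  have hmem : ∀ i, ∀ᵐ ω ∂μ, ζ i ω ∈ Set.Ioo (0:ℝ) 1 := by
    intro i
    rcases lt_or_ge i k with h | h
    · exact ae_mem_Ioo_of_law (hζmeas i) (Or.inr ⟨_, _, hζlaw i h⟩)
    · exact ae_mem_Ioo_of_law (hζmeas i) (Or.inl (hζlaw' i h))
  -- integrability of ζ i and 1 - ζ i
  have hζint : ∀ i, Integrable (ζ i) μ := by
    intro i
    refine Integrable.mono' (integrable_const 1) (hζmeas i).aestronglyMeasurable ?_
    filter_upwards [hmem i] with ω hω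
    rw [Real.norm_eq_abs, abs_of_pos hω.1]; exact hω.2.le
  have hηint : ∀ i, Integrable (fun ω => 1 - ζ i ω) μ := by
    intro i
    refine Integrable.mono' (integrable_const 1) ?_ ?_
    · exact (measurable_const.sub (hζmeas i)).aestronglyMeasurable
    · filter_upwards [hmem i] with ω hω
      rw [Real.norm_eq_abs, abs_of_pos (by linarith [hω.2])]; linarith [hω.1]
  -- moments
  have hEζ : ∀ i < k, ∫ ω, ζ i ω ∂μ = (a i : ℝ) / T i := by
    intro i hik
    have h1 : ∫ ω, ζ i ω ∂μ = ∫ x, x ∂(Measure.map (ζ i) μ) :=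
      (integral_map (hζmeas i).aemeasurable measurable_id.aestronglyMeasurable).symm
    rw [h1, hζlaw i hik]
    have h2 : (1 + ∑ j ∈ Finset.Ico (i + 1) k, (a j : ℝ)) =
        ((1 + ∑ j ∈ Finset.Ico (i + 1) k, a j : ℕ) : ℝ) := by push_cast; ring
    rw [h2, betaMeasure_mean (a i) (1 + ∑ j ∈ Finset.Ico (i + 1) k, a j) (ha i hik) (by positivity)]
    congr 1
    · rw [← hTrec i hik]; push_cast; ring
  have hEη : ∀ i < k, ∫ ω, (1 - ζ i ω) ∂μ = T (i + 1) / T i := by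
    intro i hik
    have h1 : ∫ ω, (1 - ζ i ω) ∂μ = ∫ x, (1 - x) ∂(Measure.map (ζ i) μ) :=
      (integral_map (hζmeas i).aemeasurable
        (measurable_const.sub measurable_id).aestronglyMeasurable).symm
    rw [h1, hζlaw i hik]
    have h2 : (1 + ∑ j ∈ Finset.Ico (i + 1) k, (a j : ℝ)) =
        ((1 + ∑ j ∈ Finset.Ico (i + 1) k, a j : ℕ) : ℝ) := by push_cast; ring
    rw [h2, betaMeasure_mean' (a i) (1 + ∑ j ∈ Finset.Ico (i + 1) k, a j) (ha i hik) (by positivity)]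
    have h3 : ((1 + ∑ j ∈ Finset.Ico (i + 1) k, a j : ℕ) : ℝ) = T (i + 1) := by
      simp only [hT]; push_cast; ring
    rw [h3]
    congr 1
    rw [← hTrec i hik, ← h3]
  have hEζ' : ∀ i, k ≤ i → ∫ ω, ζ i ω ∂μ = 1 / 2 := by
    intro i hik
    have h1 : ∫ ω, ζ i ω ∂μ = ∫ x, x ∂(Measure.map (ζ i) μ) :=
      (integral_map (hζmeas i).aemeasurable measurable_id.aestronglyMeasurable).symm
    rw [h1, hζlaw' i hik, unif_mean]
  have hEη' : ∀ i, k ≤ i → ∫ ω, (1 - ζ i ω) ∂μ = 1 / 2 := by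
    intro i hik
    have h1 : ∫ ω, (1 - ζ i ω) ∂μ = ∫ x, (1 - x) ∂(Measure.map (ζ i) μ) :=
      (integral_map (hζmeas i).aemeasurable
        (measurable_const.sub measurable_id).aestronglyMeasurable).symm
    rw [h1, hζlaw' i hik, unif_mean']
  -- expectations of xi
  have hmemAll : ∀ᵐ ω ∂μ, ∀ j, ζ j ω ∈ Set.Ioo (0:ℝ) 1 := ae_all_iff.mpr hmem
  set P : ℕ → ℝ := fun i => ∏ j ∈ Finset.range i, ∫ ω, (1 - ζ j ω) ∂μ with hP
  have hPsucc : ∀ n, P (n + 1) = P n * ∫ ω, (1 - ζ n ω) ∂μ := fun n =>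
    Finset.prod_range_succ _ n
  have hξkey : ∀ i, Integrable (ξ i) μ ∧ ∫ ω, ξ i ω ∂μ = (∫ ω, ζ i ω ∂μ) * P i := by
    intro i
    set Y : ℕ → Ω → ℝ := fun j => if j = i then ζ i else fun ω => 1 - ζ j ω with hY
    have hYmeas : ∀ j, Measurable (Y j) := by
      intro j; simp only [hY]; split_ifs
      · exact hζmeas i
      · exact measurable_const.sub (hζmeas j)
    have hYindep : iIndepFun Y μ := by
      have h := hζindep.comp (g := fun j => if j = i then id else fun x : ℝ => 1 - x)
        (fun j => by show Measurable (if j = i then id else fun x : ℝ => 1 - x); split_ifs; exacts [measurable_id, measurable_const.sub measurable_id])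
      convert h using 1
      funext j; simp only [hY]; split_ifs with hji
      · subst hji; rfl
      · rfl
    have hYint : ∀ j, Integrable (Y j) μ := by
      intro j; simp only [hY]; split_ifs
      · exact hζint i
      · exact hηint j
    obtain ⟨hI, hE⟩ := integral_finset_prod_of_indep hYmeas hYindep hYint (Finset.range (i + 1))
    have hfun : (fun ω => ∏ j ∈ Finset.range (i + 1), Y j ω) = ξ i := by
      funext ω
      rw [Finset.prod_range_succ, hξ i ω]
      simp only [hY, if_pos rfl]
      rw [mul_comm]
      congr 1
      exact Finset.prod_congr rfl fun j hj => by
        simp only [if_neg (Finset.mem_range.mp hj).ne]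
    constructor
    · rw [← hfun]; exact hI
    · rw [← hfun, hE, Finset.prod_range_succ]
      simp only [hY, if_pos rfl]
      rw [mul_comm]
      congr 1
      refine Finset.prod_congr rfl fun j hj => ?_
      simp only [if_neg (Finset.mem_range.mp hj).ne]
  -- values of P
  have hPle : ∀ i, i ≤ k → P i = T i / T 0 := by
    intro i
    induction i with
    | zero => intro _; simp [hP, div_self (hTne 0)]
    | succ n ihn =>
      intro hik
      have hnk : n < k := hik
      rw [hPsucc, ihn (Nat.le_of_lt hnk), hEη n hnk]
      rw [mul_comm, div_mul_div_cancel₀ (hTne n)]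
  have hPge : ∀ m, P (k + m) = (1 / T 0) * (1 / 2) ^ m := by
    intro m
    induction m with
    | zero =>
      rw [Nat.add_zero, hPle k le_rfl, hTk k le_rfl]
      simp
    | succ n ihn =>
      rw [show k + (n + 1) = (k + n) + 1 from rfl, hPsucc, ihn,
        hEη' (k + n) (Nat.le_add_right k n)]
      ring
  -- values of expectations of xi
  have hE1 : ∀ i < k, ∫ ω, ξ i ω ∂μ = (a i : ℝ) / T 0 := by
    intro i hik
    rw [(hξkey i).2, hEζ i hik, hPle i (le_of_lt hik)]
    field_simp
    rw [mul_comm (T i) (T 0), mul_div_mul_right _ _ (hTne i)]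
  have hE2 : ∀ m, ∫ ω, ξ (k + m) ω ∂μ = (1 / T 0) * (1 / 2) ^ (m + 1) := by
    intro m
    rw [(hξkey (k + m)).2, hEζ' (k + m) (Nat.le_add_right k m), hPge m]
    ring
  -- the series of expectations
  set G : ℕ → ℝ := fun i => ((i : ℝ) + 1) * ∫ ω, ξ i ω ∂μ with hG
  have hGtail : ∀ n : ℕ, G (n + k) =
      (1 / T 0) * ((n : ℝ) * (1 / 2) ^ (n + 1)) +
        (1 / T 0) * (((k : ℝ) + 1) * (1 / 2) ^ (n + 1)) := by
    intro n
    rw [hG]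
    simp only []
    rw [show n + k = k + n from Nat.add_comm n k, hE2 n]
    push_cast
    ring
  have s1 : Summable (fun n : ℕ => (n : ℝ) * (1 / 2) ^ n) := by
    have h := summable_pow_mul_geometric_of_norm_lt_one (R := ℝ) 1 (r := 1 / 2) (by norm_num)
    simpa using h
  have s2 : Summable (fun n : ℕ => ((1 : ℝ) / 2) ^ n) :=
    summable_geometric_of_lt_one (by norm_num) (by norm_num)
  have s1' : Summable (fun n : ℕ => (n : ℝ) * (1 / 2) ^ (n + 1)) := by
    refine (s1.mul_left (1 / 2)).congr fun n => ?_
    ring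
  have s2' : Summable (fun n : ℕ => ((k : ℝ) + 1) * (1 / 2) ^ (n + 1)) := by
    refine ((s2.mul_left (1 / 2)).mul_left ((k : ℝ) + 1)).congr fun n => ?_
    ring
  have hsumTail : Summable fun n => G (n + k) := by
    have h := (s1'.mul_left (1 / T 0)).add (s2'.mul_left (1 / T 0))
    exact h.congr fun n => (hGtail n).symm
  have hsumG : Summable G := (summable_nat_add_iff k).mp hsumTail
  have ht1 : ∑' n : ℕ, (n : ℝ) * (1 / 2) ^ (n + 1) = 1 := by
    rw [tsum_congr (fun n : ℕ => show (n : ℝ) * (1 / 2) ^ (n + 1)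
        = (1 / 2) * ((n : ℝ) * (1 / 2) ^ n) from by ring), tsum_mul_left,
      tsum_coe_mul_geometric_of_norm_lt_one (by norm_num : ‖(1:ℝ)/2‖ < 1)]
    norm_num
  have ht2 : ∑' n : ℕ, ((k : ℝ) + 1) * (1 / 2) ^ (n + 1) = (k : ℝ) + 1 := by
    rw [tsum_mul_left, tsum_congr (fun n : ℕ => show ((1 : ℝ) / 2) ^ (n + 1)
        = (1 / 2) * ((1 / 2) ^ n) from by ring), tsum_mul_left,
      tsum_geometric_of_lt_one (by norm_num) (by norm_num)]
    norm_num
  have htsumTail : ∑' n : ℕ, G (n + k) = ((k : ℝ) + 2) / T 0 := by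
    rw [tsum_congr hGtail, Summable.tsum_add (s1'.mul_left _) (s2'.mul_left _),
      tsum_mul_left, tsum_mul_left, ht1, ht2]
    field_simp
    ring
  have htsumG : ∑' i, G i =
      ((∑ i ∈ Finset.range k, ((i : ℝ) + 1) * a i) + k + 2) / T 0 := by
    rw [← Summable.sum_add_tsum_nat_add k hsumG, htsumTail]
    have hhead : ∑ i ∈ Finset.range k, G i =
        (∑ i ∈ Finset.range k, ((i : ℝ) + 1) * a i) / T 0 := by
      rw [Finset.sum_div]
      refine Finset.sum_congr rfl fun i hi => ?_
      rw [hG]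
      simp only []
      rw [hE1 i (Finset.mem_range.mp hi)]
      ring
    rw [hhead, ← add_div]
    congr 1
    ring
  -- measurability and integrability of the terms
  have hξmeas : ∀ i, Measurable (ξ i) := by
    intro i
    have h : ξ i = fun ω => ζ i ω * ∏ j ∈ Finset.range i, (1 - ζ j ω) := funext (hξ i)
    rw [h]
    exact (hζmeas i).mul (Finset.measurable_prod _ fun j _ => measurable_const.sub (hζmeas j))
  have hfmeas : ∀ i : ℕ, Measurable (fun ω => ((i : ℝ) + 1) * ξ i ω) :=
    fun i => measurable_const.mul (hξmeas i)
  have hfnn : ∀ i : ℕ, 0 ≤ᵐ[μ] fun ω => ((i : ℝ) + 1) * ξ i ω := by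
    intro i
    filter_upwards [hmemAll] with ω hω
    have h1 : 0 ≤ ξ i ω := by
      rw [hξ i ω]
      refine mul_nonneg (hω i).1.le (Finset.prod_nonneg fun j _ => ?_)
      linarith [(hω j).2]
    have h2 : (0:ℝ) ≤ (i : ℝ) + 1 := by positivity
    exact mul_nonneg h2 h1
  have hfint : ∀ i : ℕ, Integrable (fun ω => ((i : ℝ) + 1) * ξ i ω) μ :=
    fun i => ((hξkey i).1).const_mul _
  have hfG : ∀ i : ℕ, ∫ ω, ((i : ℝ) + 1) * ξ i ω ∂μ = G i := by
    intro i
    rw [hG]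
    simp only []
    rw [integral_const_mul]
  have hGnn : ∀ i, 0 ≤ G i := by
    intro i
    rw [← hfG i]
    exact integral_nonneg_of_ae (hfnn i)
  have hflint' : ∀ i : ℕ, ∫⁻ ω, ENNReal.ofReal (((i : ℝ) + 1) * ξ i ω) ∂μ
      = ENNReal.ofReal (G i) := by
    intro i
    rw [← ofReal_integral_eq_lintegral_ofReal (hfint i) (hfnn i), hfG i]
  have hflint : ∀ i : ℕ, ∫⁻ ω, ‖((i : ℝ) + 1) * ξ i ω‖ₑ ∂μ = ENNReal.ofReal (G i) := by
    intro i
    rw [← hflint' i]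
    refine lintegral_congr_ae ?_
    filter_upwards [hfnn i] with ω hω
    exact Real.enorm_eq_ofReal hω
  have hlintsum : (∑' i : ℕ, ∫⁻ ω, ‖((i : ℝ) + 1) * ξ i ω‖ₑ ∂μ) ≠ ⊤ := by
    rw [tsum_congr hflint, ← ENNReal.ofReal_tsum_of_nonneg hGnn hsumG]
    exact ENNReal.ofReal_ne_top
  have hinterchange : ∫ ω, (∑' i : ℕ, ((i : ℝ) + 1) * ξ i ω) ∂μ = ∑' i, G i := by
    rw [integral_tsum (fun i => (hfmeas i).aestronglyMeasurable) hlintsum]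
    exact tsum_congr hfG
  -- integrability of the total sum
  have hFmeas : Measurable (fun ω => ∑' i : ℕ, ENNReal.ofReal (((i : ℝ) + 1) * ξ i ω)) :=
    Measurable.ennreal_tsum fun i => (hfmeas i).ennreal_ofReal
  have hFlint : (∫⁻ ω, ∑' i : ℕ, ENNReal.ofReal (((i : ℝ) + 1) * ξ i ω) ∂μ) ≠ ⊤ := by
    rw [lintegral_tsum fun i => ((hfmeas i).ennreal_ofReal).aemeasurable,
      tsum_congr hflint', ← ENNReal.ofReal_tsum_of_nonneg hGnn hsumG]
    exact ENNReal.ofReal_ne_top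
  have hae : (fun ω => ∑' i : ℕ, ((i : ℝ) + 1) * ξ i ω) =ᵐ[μ]
      (fun ω => (∑' i : ℕ, ENNReal.ofReal (((i : ℝ) + 1) * ξ i ω)).toReal) := by
    filter_upwards [ae_all_iff.mpr hfnn] with ω hω
    rw [ENNReal.tsum_toReal_eq (fun i => ENNReal.ofReal_ne_top)]
    exact tsum_congr fun i => (ENNReal.toReal_ofReal (hω i)).symm
  have hInt : Integrable (fun ω => ∑' i : ℕ, ((i : ℝ) + 1) * ξ i ω) μ := by
    refine ⟨(hFmeas.ennreal_toReal.aestronglyMeasurable).congr hae.symm, ?_⟩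
    rw [hasFiniteIntegral_congr hae]
    refine lt_of_le_of_lt (lintegral_mono fun ω => ?_) hFlint.lt_top
    rw [Real.enorm_eq_ofReal ENNReal.toReal_nonneg]
    exact ENNReal.ofReal_toReal_le
  -- conclusion
  rw [integral_add (integrable_const (-2)) hInt, integral_const, hinterchange, htsumG]
  have hT0 : T 0 = 1 + ∑ i ∈ Finset.range k, (a i : ℝ) := by
    simp only [hT]
    rw [Finset.range_eq_Ico]
  rw [hT0]
  simp [measure_univ]

/-- For `ξ ~ GEM(a)` with `a = (a 0, …, a (k-1))` nonempty and
`b = ∑ a_i`, one has `E[D(ξ)] = -2 + (∑ i·a_i + k + 2)/(1 + b)` where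
`D(ξ) = -2 + ∑ i·ξ_i` (0-indexed: `ξ i` is `ξ_{i+1}` and gets weight `i+1`).
Moreover for a standard GEM sequence `ξ'` (all `ζ' i` uniform), `E[D(ξ')] = 0`. -/
theorem gem_D_expectation
    {Ω : Type*} [MeasurableSpace Ω] (μ : Measure Ω) [IsProbabilityMeasure μ]
    (k : ℕ) (hk : 0 < k) (a : ℕ → ℕ) (ha : ∀ i < k, 0 < a i)
    (ζ : ℕ → Ω → ℝ) (hζmeas : ∀ i, Measurable (ζ i))
    (hζindep : iIndepFun ζ μ)
    (hζlaw : ∀ i < k, Measure.map (ζ i) μ =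
      _root_.betaMeasure (a i) (1 + ∑ j ∈ Finset.Ico (i + 1) k, (a j : ℝ)))
    (hζlaw' : ∀ i, k ≤ i → Measure.map (ζ i) μ = unifMeasure)
    (ξ : ℕ → Ω → ℝ)
    (hξ : ∀ i ω, ξ i ω = ζ i ω * ∏ j ∈ Finset.range i, (1 - ζ j ω))
    (ζ' : ℕ → Ω → ℝ) (hζ'meas : ∀ i, Measurable (ζ' i))
    (hζ'indep : iIndepFun ζ' μ)
    (hζ'law : ∀ i, Measure.map (ζ' i) μ = unifMeasure)
    (ξ' : ℕ → Ω → ℝ)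
    (hξ' : ∀ i ω, ξ' i ω = ζ' i ω * ∏ j ∈ Finset.range i, (1 - ζ' j ω)) :
    (∫ ω, (-2 + ∑' i : ℕ, ((i : ℝ) + 1) * ξ i ω) ∂μ =
      -2 + ((∑ i ∈ Finset.range k, ((i : ℝ) + 1) * a i) + k + 2) /
            (1 + ∑ i ∈ Finset.range k, (a i : ℝ))) ∧
    ∫ ω, (-2 + ∑' i : ℕ, ((i : ℝ) + 1) * ξ' i ω) ∂μ = 0 := by
  constructor
  · exact gem_master μ k a ha ζ hζmeas hζindep hζlaw hζlaw' ξ hξ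
  · have h := gem_master μ 0 (fun _ => 0) (fun i hi => absurd hi (Nat.not_lt_zero i))
      ζ' hζ'meas hζ'indep (fun i hi => absurd hi (Nat.not_lt_zero i))
      (fun i _ => hζ'law i) ξ' hξ'
    rw [h]
    norm_num
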